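/- Let F be an r-sort species admitting a composition operator Η. For every nonempty r-tuple Ω of finite sets and every choice of base point (ω,ρ) ∈ Ω (meaning ω belongs to the ρ-th component of Ω), one has F[Ω] = ⋃ η(F_Η[Ω1] × F[Ω − Ω1]), the union being over all r-tuples Ω1 with (ω,ρ) ∈ Ω1 ⊆ Ω (containment componentwise), where Ω − Ω1 denotes componentwise set difference. -/

import Mathlib

open scoped Classical

noncomputable section

/-- Objects of `Set^r`: `r`-tuples of finite sets (realized as finite subsets of `ℕ`). -/
abbrev Obj (r : ℕ) := Fin r → Finset ℕ

variable {r : ℕ}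

/-- The `r`-tuple of empty sets. -/
def oEmpty (r : ℕ) : Obj r := fun _ => ∅

/-- Componentwise union (the disjoint union `⨿` when the arguments are
componentwise disjoint). -/
def oUnion (Ω₁ Ω₂ : Obj r) : Obj r := fun i => Ω₁ i ∪ Ω₂ i

/-- Componentwise intersection. -/
def oInter (Ω₁ Ω₂ : Obj r) : Obj r := fun i => Ω₁ i ∩ Ω₂ i

/-- Componentwise set difference. -/
def oDiff (Ω₁ Ω₂ : Obj r) : Obj r := fun i => Ω₁ i \ Ω₂ i

/-- Componentwise disjointness. -/
def oDisj (Ω₁ Ω₂ : Obj r) : Prop := ∀ i, Disjoint (Ω₁ i) (Ω₂ i)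

/-- Componentwise containment. -/
def oSub (Ω₁ Ω₂ : Obj r) : Prop := ∀ i, Ω₁ i ⊆ Ω₂ i

/-- A morphism of `Set^r`: an `r`-tuple of bijections between the components. -/
def Mor (Ω₁ Ω₂ : Obj r) : Type := ∀ i, {x // x ∈ Ω₁ i} ≃ {x // x ∈ Ω₂ i}

/-- The identity morphism. -/
def idMor (Ω : Obj r) : Mor Ω Ω := fun _ => Equiv.refl _

/-- Composition of morphisms. -/
def compMor {Ω₁ Ω₂ Ω₃ : Obj r} (f : Mor Ω₁ Ω₂) (g : Mor Ω₂ Ω₃) : Mor Ω₁ Ω₃ :=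
  fun i => (f i).trans (g i)

/-- An `r`-sort species: a (covariant) functor from `Set^r` to the category of
finite sets and bijections.  The value `F[Ω]` is the finite set `obj Ω`, and the
action on a morphism `f` is encoded by the function `map f : ℕ → ℕ` (only its
values on `obj Ω₁` are relevant). -/
structure Species (r : ℕ) where
  obj : Obj r → Finset ℕ
  map : ∀ {Ω₁ Ω₂ : Obj r}, Mor Ω₁ Ω₂ → ℕ → ℕ
  map_mem : ∀ {Ω₁ Ω₂ : Obj r} (f : Mor Ω₁ Ω₂), ∀ x ∈ obj Ω₁, map f x ∈ obj Ω₂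
  map_id : ∀ (Ω : Obj r), ∀ x ∈ obj Ω, map (idMor Ω) x = x
  map_comp : ∀ {Ω₁ Ω₂ Ω₃ : Obj r} (f : Mor Ω₁ Ω₂) (g : Mor Ω₂ Ω₃), ∀ x ∈ obj Ω₁,
    map (compMor f g) x = map g (map f x)

/-- The canonical identification of a disjoint union `s ∪ t` with the sum `s ⊕ t`. -/
def finsetSumEquiv {s t : Finset ℕ} (h : Disjoint s t) :
    {x // x ∈ s ∪ t} ≃ {x // x ∈ s} ⊕ {x // x ∈ t} :=
  (Equiv.subtypeEquivRight (fun x => by simp)).trans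
    (Equiv.Set.union (s := (↑s : Set ℕ)) (t := (↑t : Set ℕ)) (by exact_mod_cast h))

/-- The disjoint union of two bijections, as a bijection between unions. -/
def finsetUnionEquiv {s t s' t' : Finset ℕ} (h : Disjoint s t) (h' : Disjoint s' t')
    (f : {x // x ∈ s} ≃ {x // x ∈ s'}) (g : {x // x ∈ t} ≃ {x // x ∈ t'}) :
    {x // x ∈ s ∪ t} ≃ {x // x ∈ s' ∪ t'} :=
  (finsetSumEquiv h).trans ((f.sumCongr g).trans (finsetSumEquiv h').symm)

/-- The disjoint union `f ⨿ g` of two morphisms of `Set^r`. -/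
def morUnion {Ω₁ Ω₂ Ω₁' Ω₂' : Obj r} (h : oDisj Ω₁ Ω₂) (h' : oDisj Ω₁' Ω₂')
    (f : Mor Ω₁ Ω₁') (g : Mor Ω₂ Ω₂') : Mor (oUnion Ω₁ Ω₂) (oUnion Ω₁' Ω₂') :=
  fun i => finsetUnionEquiv (h i) (h' i) (f i) (g i)

/-- A composition operator `Η` for the species `F`: a natural transformation from
`F × F` (on pairs of componentwise disjoint objects) to `F ∘ ⨿` with injective
components, satisfying Axiom (D1). -/
structure CompOp {r : ℕ} (F : Species r) where
  η : Obj r → Obj r → ℕ × ℕ → ℕ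
  mem_η : ∀ {Ω₁ Ω₂ : Obj r}, oDisj Ω₁ Ω₂ → ∀ x ∈ F.obj Ω₁, ∀ y ∈ F.obj Ω₂,
    η Ω₁ Ω₂ (x, y) ∈ F.obj (oUnion Ω₁ Ω₂)
  inj_η : ∀ {Ω₁ Ω₂ : Obj r}, oDisj Ω₁ Ω₂ →
    Set.InjOn (η Ω₁ Ω₂) ((F.obj Ω₁ : Set ℕ) ×ˢ (F.obj Ω₂ : Set ℕ))
  natural : ∀ {Ω₁ Ω₂ Ω₁' Ω₂' : Obj r} (h : oDisj Ω₁ Ω₂) (h' : oDisj Ω₁' Ω₂')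
    (f : Mor Ω₁ Ω₁') (g : Mor Ω₂ Ω₂'), ∀ x ∈ F.obj Ω₁, ∀ y ∈ F.obj Ω₂,
    F.map (morUnion h h' f g) (η Ω₁ Ω₂ (x, y)) = η Ω₁' Ω₂' (F.map f x, F.map g y)
  D1 : ∀ {Ω₁ Ω₂ Ω₃ Ω₄ : Obj r}, oDisj Ω₁ Ω₂ → oDisj Ω₃ Ω₄ →
    oUnion Ω₁ Ω₂ = oUnion Ω₃ Ω₄ →
    η Ω₁ Ω₂ '' ((F.obj Ω₁ : Set ℕ) ×ˢ (F.obj Ω₂ : Set ℕ)) ∩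
      η Ω₃ Ω₄ '' ((F.obj Ω₃ : Set ℕ) ×ˢ (F.obj Ω₄ : Set ℕ)) =
    η Ω₁ Ω₂ ''
      ((η (oInter Ω₁ Ω₃) (oInter Ω₁ Ω₄) ''
          ((F.obj (oInter Ω₁ Ω₃) : Set ℕ) ×ˢ (F.obj (oInter Ω₁ Ω₄) : Set ℕ))) ×ˢ
        (η (oInter Ω₂ Ω₃) (oInter Ω₂ Ω₄) ''
          ((F.obj (oInter Ω₂ Ω₃) : Set ℕ) ×ˢ (F.obj (oInter Ω₂ Ω₄) : Set ℕ))))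

/-- The set `F_Η[Ω]` of indecomposable elements of `F[Ω]`. -/
def indec (F : Species r) (E : CompOp F) (Ω : Obj r) : Set ℕ :=
  if Ω = oEmpty r then ∅
  else (F.obj Ω : Set ℕ) \
    ⋃ (p : Obj r × Obj r) (_ : oDisj p.1 p.2) (_ : p.1 ≠ oEmpty r) (_ : p.2 ≠ oEmpty r)
      (_ : oUnion p.1 p.2 = Ω),
      E.η p.1 p.2 '' ((F.obj p.1 : Set ℕ) ×ˢ (F.obj p.2 : Set ℕ))

/-- The sets `F_Η^(k)[Ω]` of elements of `F[Ω]` consisting of exactly `k`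
indecomposable components. -/
def indecK (F : Species r) (E : CompOp F) : ℕ → Obj r → Set ℕ
  | 0 => fun Ω => if Ω = oEmpty r then (F.obj (oEmpty r) : Set ℕ) else ∅
  | (k + 1) => fun Ω => ⋃ (Ω₁ : Obj r) (_ : oSub Ω₁ Ω),
      E.η Ω₁ (oDiff Ω Ω₁) '' ((indec F E Ω₁) ×ˢ (indecK F E k (oDiff Ω Ω₁)))

/-- `Ω_I`: the componentwise disjoint union of the family `Ωs` over the index set `s`. -/
def bigU {ι : Type} [DecidableEq ι] (Ωs : ι → Obj r) (s : Finset ι) : Obj r :=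
  fun i => s.biUnion (fun j => Ωs j i)

/-- `Brack F E Ωs leaf s B` says that `B` is an `Η`-bracketing of the sets
`leaf (Ωs i)`, `i ∈ s` (each occurring exactly once).  For `leaf Ω = F[Ω]` this is an
`Η`-bracketing of the `F[Ωs i]`; for `leaf = indec F E` it is an `Η`-bracketing of
the `F_Η[Ωs i]`. -/
inductive Brack (F : Species r) (E : CompOp F) {ι : Type} [DecidableEq ι]
    (Ωs : ι → Obj r) (leaf : Obj r → Set ℕ) : Finset ι → Set ℕ → Prop
  | single (i : ι) : Brack F E Ωs leaf {i} (leaf (Ωs i))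
  | node {s t : Finset ι} {B₁ B₂ : Set ℕ} :
      Disjoint s t → s.Nonempty → t.Nonempty →
      Brack F E Ωs leaf s B₁ → Brack F E Ωs leaf t B₂ →
      Brack F E Ωs leaf (s ∪ t) (E.η (bigU Ωs s) (bigU Ωs t) '' (B₁ ×ˢ B₂))

/-- A `Λ`-weight on `(F, Η)`: Axioms (W0), (W1), (W2). -/
structure Weight {r : ℕ} (F : Species r) (E : CompOp F) (Λ : Type) [CommRing Λ]
    [Algebra ℚ Λ] where
  w : Obj r → ℕ → Λ
  W0 : ∀ x ∈ F.obj (oEmpty r), w (oEmpty r) x = 1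
  W1 : ∀ {Ω Ω' : Obj r} (f : Mor Ω Ω'), ∀ x ∈ F.obj Ω, w Ω' (F.map f x) = w Ω x
  W2 : ∀ {Ω₁ Ω₂ : Obj r}, oDisj Ω₁ Ω₂ → ∀ x ∈ indec F E Ω₁, ∀ y ∈ F.obj Ω₂,
    w (oUnion Ω₁ Ω₂) (E.η Ω₁ Ω₂ (x, y)) = w Ω₁ x * w Ω₂ y

/-- The standard object `([n₁], …, [n_r])`, with `[n] = {1, …, n}`. -/
def stdObj {r : ℕ} (n : Fin r → ℕ) : Obj r := fun i => Finset.Icc 1 (n i)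

/-- The exponential generating function
`Σ_{n₁,…,n_r ≥ 0} Σ_{x ∈ S[([n₁],…,[n_r])]} w(x) z₁^{n₁} ⋯ z_r^{n_r}/(n₁! ⋯ n_r!)`
of a subfamily `S` of a species `F`, with respect to a weight `w`. -/
def GF {r : ℕ} {Λ : Type} [CommRing Λ] [Algebra ℚ Λ] (F : Species r)
    (S : Obj r → Set ℕ) (w : Obj r → ℕ → Λ) : MvPowerSeries (Fin r) Λ :=
  fun d => (algebraMap ℚ Λ (∏ i, (1 / (Nat.factorial (d i)) : ℚ))) *
    ∑ x ∈ (F.obj (stdObj fun i => d i)).filter (fun x => x ∈ S (stdObj fun i => d i)),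
      w (stdObj fun i => d i) x

/-- The exponential `exp f = Σ_{k ≥ 0} f^k / k!` of a multivariate formal power
series `f` with zero constant term (the coefficient of a given monomial only
receives contributions from `k` at most the total degree). -/
def mvExp {σ Λ : Type} [CommRing Λ] [Algebra ℚ Λ] (f : MvPowerSeries σ Λ) :
    MvPowerSeries σ Λ :=
  fun d => ∑ k ∈ Finset.range ((d.sum fun _ m => m) + 1),
    algebraMap ℚ Λ ((1 : ℚ) / (Nat.factorial k)) * MvPowerSeries.coeff d (f ^ k)

/-- The logarithm `log f = Σ_{k ≥ 1} (-1)^{k+1} (f-1)^k / k` of a multivariate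
formal power series `f` with constant term `1`. -/
def mvLog {σ Λ : Type} [CommRing Λ] [Algebra ℚ Λ] (f : MvPowerSeries σ Λ) :
    MvPowerSeries σ Λ :=
  fun d => ∑ k ∈ Finset.Icc 1 (d.sum fun _ m => m),
    algebraMap ℚ Λ ((-1 : ℚ) ^ (k + 1) / k) * MvPowerSeries.coeff d ((f - 1) ^ k)

/-- The refined generating function `G̃F_F(z₁,…,z_r,y)`, a power series in
`z₁, …, z_r` with coefficients that are polynomials in `y` (recorded via
`Polynomial Λ`, the variable `y` being `Polynomial.X`):
`Σ_{n₁,…,n_r ≥ 0} Σ_k Σ_{x ∈ F_Η^(k)[([n₁],…,[n_r])]} y^k w(x) z₁^{n₁}⋯z_r^{n_r}/(n₁!⋯n_r!)`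
(for fixed `n₁, …, n_r` only the `k ≤ n₁ + ⋯ + n_r` contribute, since
`F_Η^(k)[Ω] = ∅ for k > ‖Ω‖`). -/
def tGF {r : ℕ} {Λ : Type} [CommRing Λ] [Algebra ℚ Λ] (F : Species r) (E : CompOp F)
    (w : Obj r → ℕ → Λ) : MvPowerSeries (Fin r) (Polynomial Λ) :=
  fun d => Polynomial.C (algebraMap ℚ Λ (∏ i, (1 / (Nat.factorial (d i)) : ℚ))) *
    ∑ k ∈ Finset.range ((∑ i, d i) + 1), Polynomial.X ^ k *
      Polynomial.C (∑ x ∈ (F.obj (stdObj fun i => d i)).filter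
          (fun x => x ∈ indecK F E k (stdObj fun i => d i)),
        w (stdObj fun i => d i) x)

/-- The species `E(F_Η)` of sets of `F_Η`-structures:  `E(F_Η)[Ω]` consists of all
finite sets `{(x₁,Ω₁),…,(x_k,Ω_k)}` with `x_i ∈ F_Η[Ω_i]`, the `Ω_i` nonempty and
pairwise componentwise disjoint, and `Ω₁ ⨿ ⋯ ⨿ Ω_k = Ω`. -/
def ESet {r : ℕ} (F : Species r) (E : CompOp F) (Ω : Obj r) :
    Set (Finset (ℕ × Obj r)) :=
  { s | (∀ p ∈ s, p.1 ∈ indec F E p.2 ∧ p.2 ≠ oEmpty r) ∧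
        (∀ p ∈ s, ∀ q ∈ s, p ≠ q → oDisj p.2 q.2) ∧
        (∀ i, Ω i = s.biUnion (fun p => p.2 i)) }

/-- The bijection between a finite set and its image under a map injective on it. -/
def imageEquiv {u : Finset ℕ} (g : ℕ → ℕ) (hg : Set.InjOn g (u : Set ℕ)) :
    {x // x ∈ u} ≃ {x // x ∈ u.image g} :=
  Equiv.ofBijective (fun x => ⟨g x, Finset.mem_image_of_mem g x.2⟩) (by
    constructor
    · rintro ⟨a, ha⟩ ⟨b, hb⟩ hab
      exact Subtype.ext (hg (by exact_mod_cast ha) (by exact_mod_cast hb)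
        (congrArg Subtype.val hab))
    · rintro ⟨y, hy⟩
      rcases Finset.mem_image.mp hy with ⟨a, ha, rfl⟩
      exact ⟨⟨a, ha⟩, rfl⟩)

/-- The underlying function `ℕ → ℕ` of the `i`-th component of a morphism. -/
def apMor {Ω Ω' : Obj r} (f : Mor Ω Ω') (i : Fin r) (a : ℕ) : ℕ :=
  if h : a ∈ Ω i then ((f i) ⟨a, h⟩ : ℕ) else a

/-- The componentwise image of a subobject `O ⊆ Ω` under a morphism `f : Ω → Ω'`. -/
def oImage {Ω Ω' : Obj r} (f : Mor Ω Ω') (O : Obj r) : Obj r :=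
  fun i => (O i).image (apMor f i)

/-- The restriction of a morphism `f : Ω → Ω'` to a subobject `O ⊆ Ω`. -/
def restrictMor {Ω Ω' : Obj r} (f : Mor Ω Ω') {O : Obj r} (hO : oSub O Ω) :
    Mor O (oImage f O) :=
  fun i => imageEquiv (apMor f i) (by
    intro a ha b hb hab
    have ha' : a ∈ Ω i := hO i (by exact_mod_cast ha)
    have hb' : b ∈ Ω i := hO i (by exact_mod_cast hb)
    have h1 : ((f i) ⟨a, ha'⟩ : ℕ) = ((f i) ⟨b, hb'⟩ : ℕ) := by
      simpa [apMor, dif_pos ha', dif_pos hb'] using hab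
    have h2 := (f i).injective (Subtype.ext h1)
    exact congrArg Subtype.val h2)

/-- The induced action of a morphism `f : Ω → Ω'` on `E(F_Η)[Ω]`. -/
def Emap {r : ℕ} (F : Species r) {Ω Ω' : Obj r} (f : Mor Ω Ω')
    (s : Finset (ℕ × Obj r)) : Finset (ℕ × Obj r) :=
  s.image (fun p =>
    if h : oSub p.2 Ω then (F.map (restrictMor f h) p.1, oImage f p.2) else p)

/-! ### Auxiliary lemmas for `stmt7` -/

lemma oDisj_symm {A B : Obj r} (h : oDisj A B) : oDisj B A := fun i => (h i).symm

lemma oDisj_empty_right (Ω : Obj r) : oDisj Ω (oEmpty r) := fun i => by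
  simp [oEmpty]

lemma oDisj_empty_left (Ω : Obj r) : oDisj (oEmpty r) Ω := fun i => by
  simp [oEmpty]

lemma oInter_self (Ω : Obj r) : oInter Ω Ω = Ω :=
  funext fun i => Finset.inter_self _

lemma oInter_eq_empty {A B : Obj r} (h : oDisj A B) : oInter A B = oEmpty r :=
  funext fun i => Finset.disjoint_iff_inter_eq_empty.mp (h i)

lemma oUnion_empty_right (Ω : Obj r) : oUnion Ω (oEmpty r) = Ω :=
  funext fun i => Finset.union_empty _

lemma oUnion_empty_left (Ω : Obj r) : oUnion (oEmpty r) Ω = Ω :=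
  funext fun i => Finset.empty_union _

lemma indec_subset (F : Species r) (E : CompOp F) (Ω : Obj r) :
    indec F E Ω ⊆ (F.obj Ω : Set ℕ) := by
  unfold indec
  split
  · exact Set.empty_subset _
  · exact Set.diff_subset

/-- `F[∅]` is nonempty as soon as `F` is nonempty somewhere. -/
lemma obj_empty_nonempty (F : Species r) (E : CompOp F)
    (hF : ∃ Ω : Obj r, (F.obj Ω).Nonempty) : (F.obj (oEmpty r)).Nonempty := by
  obtain ⟨Ω', x, hx⟩ := hF
  set N : ℕ := (Finset.univ.sup fun i => (Ω' i).sup id) + 1 with hN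
  set O' : Obj r := fun i => (Ω' i).image (fun a => a + N) with hO'
  have hd : oDisj Ω' O' := by
    intro i
    rw [Finset.disjoint_left]
    intro a ha hmem
    obtain ⟨b, _, hba⟩ := Finset.mem_image.mp hmem
    have hba' : b + N = a := hba
    have h1 : a ≤ (Ω' i).sup id := Finset.le_sup (f := id) ha
    have h2 : (Ω' i).sup id ≤ Finset.univ.sup fun i => (Ω' i).sup id :=
      Finset.le_sup (f := fun i => (Ω' i).sup id) (Finset.mem_univ i)
    have h3 : N ≤ a := hba' ▸ Nat.le_add_left N b
    rw [hN] at h3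
    omega
  have hinj : ∀ i : Fin r, Set.InjOn (fun a => a + N) ((Ω' i : Finset ℕ) : Set ℕ) := by
    intro i a _ b _ h
    have h' : a + N = b + N := h
    omega
  let f : Mor Ω' O' := fun i => imageEquiv (fun a => a + N) (hinj i)
  have hx' : F.map f x ∈ F.obj O' := F.map_mem f x hx
  have hz : E.η Ω' O' (x, F.map f x) ∈
      E.η Ω' O' '' ((F.obj Ω' : Set ℕ) ×ˢ (F.obj O' : Set ℕ)) :=
    ⟨(x, F.map f x), ⟨by exact_mod_cast hx, by exact_mod_cast hx'⟩, rfl⟩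
  have hD := E.D1 hd hd rfl
  rw [Set.inter_self, oInter_self, oInter_self, oInter_eq_empty hd,
    oInter_eq_empty (oDisj_symm hd)] at hD
  rw [hD] at hz
  obtain ⟨⟨u, v⟩, ⟨hu, _⟩, _⟩ := hz
  obtain ⟨⟨p, q⟩, ⟨_, hq⟩, _⟩ := hu
  exact ⟨q, by exact_mod_cast hq⟩

/-- `η(F[Ω] × F[∅]) = F[Ω]`. -/
lemma etaB_right (F : Species r) (E : CompOp F) (he : (F.obj (oEmpty r)).Nonempty)
    (Ω : Obj r) :
    E.η Ω (oEmpty r) '' ((F.obj Ω : Set ℕ) ×ˢ (F.obj (oEmpty r) : Set ℕ)) =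
      (F.obj Ω : Set ℕ) := by
  obtain ⟨e, he⟩ := he
  have hd : oDisj Ω (oEmpty r) := oDisj_empty_right Ω
  have hsub : E.η Ω (oEmpty r) '' ((F.obj Ω : Set ℕ) ×ˢ (F.obj (oEmpty r) : Set ℕ)) ⊆
      (F.obj Ω : Set ℕ) := by
    rintro y ⟨⟨a, b⟩, ⟨ha, hb⟩, rfl⟩
    have := E.mem_η hd a (by exact_mod_cast ha) b (by exact_mod_cast hb)
    rw [oUnion_empty_right] at this
    exact_mod_cast this
  apply Set.Subset.antisymm hsub
  intro y hy
  have hD := E.D1 hd hd rfl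
  rw [Set.inter_self, oInter_self, oInter_self, oInter_eq_empty hd,
    oInter_eq_empty (oDisj_symm hd)] at hD
  have hmem : E.η Ω (oEmpty r) (y, e) ∈
      E.η Ω (oEmpty r) '' ((F.obj Ω : Set ℕ) ×ˢ (F.obj (oEmpty r) : Set ℕ)) :=
    ⟨(y, e), ⟨hy, by exact_mod_cast he⟩, rfl⟩
  rw [hD] at hmem
  obtain ⟨⟨a, b⟩, ⟨haS, hbB⟩, heq⟩ := hmem
  have haF : a ∈ (F.obj Ω : Set ℕ) := hsub haS
  have hbF : b ∈ (F.obj (oEmpty r) : Set ℕ) := by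
    obtain ⟨⟨p, q⟩, ⟨hp, hq⟩, rfl⟩ := hbB
    have := E.mem_η (oDisj_empty_left (oEmpty r)) p (by exact_mod_cast hp) q
      (by exact_mod_cast hq)
    rw [oUnion_empty_right] at this
    exact_mod_cast this
  have := E.inj_η hd (Set.mk_mem_prod haF hbF)
    (Set.mk_mem_prod hy (by exact_mod_cast he)) heq
  have hya : y = a := (congrArg Prod.fst this).symm
  rw [hya]
  exact haS

/-- `η(F[∅] × F[Ω]) = F[Ω]`. -/
lemma etaB_left (F : Species r) (E : CompOp F) (he : (F.obj (oEmpty r)).Nonempty)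
    (Ω : Obj r) :
    E.η (oEmpty r) Ω '' ((F.obj (oEmpty r) : Set ℕ) ×ˢ (F.obj Ω : Set ℕ)) =
      (F.obj Ω : Set ℕ) := by
  obtain ⟨e, he⟩ := he
  have hd : oDisj (oEmpty r) Ω := oDisj_empty_left Ω
  have hsub : E.η (oEmpty r) Ω '' ((F.obj (oEmpty r) : Set ℕ) ×ˢ (F.obj Ω : Set ℕ)) ⊆
      (F.obj Ω : Set ℕ) := by
    rintro y ⟨⟨a, b⟩, ⟨ha, hb⟩, rfl⟩
    have := E.mem_η hd a (by exact_mod_cast ha) b (by exact_mod_cast hb)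
    rw [oUnion_empty_left] at this
    exact_mod_cast this
  apply Set.Subset.antisymm hsub
  intro y hy
  have hD := E.D1 hd hd rfl
  rw [Set.inter_self, oInter_self, oInter_self, oInter_eq_empty hd,
    oInter_eq_empty (oDisj_symm hd)] at hD
  have hmem : E.η (oEmpty r) Ω (e, y) ∈
      E.η (oEmpty r) Ω '' ((F.obj (oEmpty r) : Set ℕ) ×ˢ (F.obj Ω : Set ℕ)) :=
    ⟨(e, y), ⟨by exact_mod_cast he, hy⟩, rfl⟩
  rw [hD] at hmem
  obtain ⟨⟨a, b⟩, ⟨haA, hbS⟩, heq⟩ := hmem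
  have hbF : b ∈ (F.obj Ω : Set ℕ) := hsub hbS
  have haF : a ∈ (F.obj (oEmpty r) : Set ℕ) := by
    obtain ⟨⟨p, q⟩, ⟨hp, hq⟩, rfl⟩ := haA
    have := E.mem_η (oDisj_empty_left (oEmpty r)) p (by exact_mod_cast hp) q
      (by exact_mod_cast hq)
    rw [oUnion_empty_right] at this
    exact_mod_cast this
  have := E.inj_η hd (Set.mk_mem_prod haF hbF)
    (Set.mk_mem_prod (by exact_mod_cast he) hy) heq
  have hyb : y = b := (congrArg Prod.snd this).symm
  rw [hyb]
  exact hbS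

/-- Commutativity of the decomposition images. -/
lemma eta_comm (F : Species r) (E : CompOp F) (he : (F.obj (oEmpty r)).Nonempty)
    {A B : Obj r} (hd : oDisj A B) :
    E.η A B '' ((F.obj A : Set ℕ) ×ˢ (F.obj B : Set ℕ)) ⊆
      E.η B A '' ((F.obj B : Set ℕ) ×ˢ (F.obj A : Set ℕ)) := by
  have hU : oUnion A B = oUnion B A := funext fun i => Finset.union_comm _ _
  have hD := E.D1 hd (oDisj_symm hd) hU
  rw [oInter_eq_empty hd, oInter_self, oInter_self, oInter_eq_empty (oDisj_symm hd),
    etaB_left F E he A, etaB_right F E he B] at hD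
  intro x hx
  have h2 : x ∈ E.η A B '' ((F.obj A : Set ℕ) ×ˢ (F.obj B : Set ℕ)) ∩
      E.η B A '' ((F.obj B : Set ℕ) ×ˢ (F.obj A : Set ℕ)) := by
    rw [hD]; exact hx
  exact h2.2

/-- Associativity of decompositions. -/
lemma eta_assoc (F : Species r) (E : CompOp F) (he : (F.obj (oEmpty r)).Nonempty)
    {A B C : Obj r} (hAB : oDisj A B) (hAC : oDisj A C) (hBC : oDisj B C) :
    E.η (oUnion A B) C ''
        ((E.η A B '' ((F.obj A : Set ℕ) ×ˢ (F.obj B : Set ℕ))) ×ˢ (F.obj C : Set ℕ)) ⊆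
      E.η A (oUnion B C) '' ((F.obj A : Set ℕ) ×ˢ (F.obj (oUnion B C) : Set ℕ)) := by
  have hd1 : oDisj (oUnion A B) C := fun i =>
    Finset.disjoint_union_left.mpr ⟨hAC i, hBC i⟩
  have hd2 : oDisj A (oUnion B C) := fun i =>
    Finset.disjoint_union_right.mpr ⟨hAB i, hAC i⟩
  have hU : oUnion (oUnion A B) C = oUnion A (oUnion B C) :=
    funext fun i => Finset.union_assoc _ _ _
  have hD := E.D1 hd1 hd2 hU
  have e1 : oInter (oUnion A B) A = A := funext fun i =>
    Finset.inter_eq_right.mpr Finset.subset_union_left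
  have e2 : oInter (oUnion A B) (oUnion B C) = B := by
    funext i
    ext t
    simp only [oInter, oUnion, Finset.mem_inter, Finset.mem_union]
    have h1 : t ∈ A i → t ∉ B i := fun h => Finset.disjoint_left.mp (hAB i) h
    have h2 : t ∈ A i → t ∉ C i := fun h => Finset.disjoint_left.mp (hAC i) h
    tauto
  have e3 : oInter C A = oEmpty r := oInter_eq_empty (oDisj_symm hAC)
  have e4 : oInter C (oUnion B C) = C := funext fun i =>
    Finset.inter_eq_left.mpr Finset.subset_union_right
  rw [e1, e2, e3, e4, etaB_left F E he C] at hD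
  intro x hx
  have h2 : x ∈ E.η (oUnion A B) C ''
      ((F.obj (oUnion A B) : Set ℕ) ×ˢ (F.obj C : Set ℕ)) ∩
      E.η A (oUnion B C) '' ((F.obj A : Set ℕ) ×ˢ (F.obj (oUnion B C) : Set ℕ)) := by
    rw [hD]; exact hx
  exact h2.2
/-- For nonempty `Ω` and any base point `(ω, ρ) ∈ Ω`,
`F[Ω] = ⋃_{(ω,ρ) ∈ Ω₁ ⊆ Ω} η(F_Η[Ω₁] × F[Ω − Ω₁])`. -/
theorem stmt7 {r : ℕ} (hr : 0 < r) (F : Species r) (E : CompOp F)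
    (hF : ∃ Ω : Obj r, (F.obj Ω).Nonempty)
    (Ω : Obj r) (hΩ : Ω ≠ oEmpty r) (ρ : Fin r) (ω : ℕ) (hω : ω ∈ Ω ρ) :
    (F.obj Ω : Set ℕ) =
      ⋃ (Ω₁ : Obj r) (_ : oSub Ω₁ Ω) (_ : ω ∈ Ω₁ ρ),
        E.η Ω₁ (oDiff Ω Ω₁) '' ((indec F E Ω₁) ×ˢ (F.obj (oDiff Ω Ω₁) : Set ℕ)) := by
  have he := obj_empty_nonempty F E hF
  ext x
  simp only [Set.mem_iUnion]
  constructor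
  · intro hx
    have key : ∀ n (Ω₁ : Obj r), (∑ i, (Ω₁ i).card) ≤ n → ω ∈ Ω₁ ρ → oSub Ω₁ Ω →
        x ∈ E.η Ω₁ (oDiff Ω Ω₁) ''
          ((F.obj Ω₁ : Set ℕ) ×ˢ (F.obj (oDiff Ω Ω₁) : Set ℕ)) →
        ∃ Ω₁' : Obj r, ∃ _ : oSub Ω₁' Ω, ∃ _ : ω ∈ Ω₁' ρ,
          x ∈ E.η Ω₁' (oDiff Ω Ω₁') ''
            ((indec F E Ω₁') ×ˢ (F.obj (oDiff Ω Ω₁') : Set ℕ)) := by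
      intro n
      induction n with
      | zero =>
        intro Ω₁ hle hω1 _ _
        exfalso
        have h1 : 0 < (Ω₁ ρ).card := Finset.card_pos.mpr ⟨ω, hω1⟩
        have h2 : (Ω₁ ρ).card ≤ ∑ i, (Ω₁ i).card :=
          Finset.single_le_sum (f := fun i => (Ω₁ i).card)
            (fun _ _ => Nat.zero_le _) (Finset.mem_univ ρ)
        omega
      | succ n ih =>
        intro Ω₁ hle hω1 hsub hx1
        obtain ⟨⟨a, b⟩, ⟨ha, hb⟩, hxe⟩ := hx1
        by_cases hind : a ∈ indec F E Ω₁
        · exact ⟨Ω₁, hsub, hω1, ⟨(a, b), ⟨hind, hb⟩, hxe⟩⟩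
        · have hne : Ω₁ ≠ oEmpty r := by
            intro h
            rw [h] at hω1
            simp [oEmpty] at hω1
          have hdec : a ∈ ⋃ (p : Obj r × Obj r) (_ : oDisj p.1 p.2)
              (_ : p.1 ≠ oEmpty r) (_ : p.2 ≠ oEmpty r) (_ : oUnion p.1 p.2 = Ω₁),
              E.η p.1 p.2 '' ((F.obj p.1 : Set ℕ) ×ˢ (F.obj p.2 : Set ℕ)) := by
            by_contra h
            apply hind
            rw [indec, if_neg hne]
            exact ⟨ha, h⟩
          simp only [Set.mem_iUnion] at hdec
          obtain ⟨⟨A, B⟩, hdAB, hAne, hBne, hABu, haAB⟩ := hdec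
          have main : ∀ A B : Obj r, oDisj A B → B ≠ oEmpty r → oUnion A B = Ω₁ →
              ω ∈ A ρ →
              a ∈ E.η A B '' ((F.obj A : Set ℕ) ×ˢ (F.obj B : Set ℕ)) →
              ∃ Ω₁' : Obj r, ∃ _ : oSub Ω₁' Ω, ∃ _ : ω ∈ Ω₁' ρ,
                x ∈ E.η Ω₁' (oDiff Ω Ω₁') ''
                  ((indec F E Ω₁') ×ˢ (F.obj (oDiff Ω Ω₁') : Set ℕ)) := by
            clear hdAB hAne hBne hABu haAB hind
            intro A B hdAB hBne hABu hωA haAB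
            have hAsub : ∀ i, A i ⊆ Ω₁ i := by
              intro i
              rw [← hABu]
              exact Finset.subset_union_left
            have hBsub : ∀ i, B i ⊆ Ω₁ i := by
              intro i
              rw [← hABu]
              exact Finset.subset_union_right
            have hAD : oDisj A (oDiff Ω Ω₁) := fun i =>
              Finset.disjoint_sdiff.mono_left (hAsub i)
            have hBD : oDisj B (oDiff Ω Ω₁) := fun i =>
              Finset.disjoint_sdiff.mono_left (hBsub i)
            have hx2 : x ∈ E.η (oUnion A B) (oDiff Ω Ω₁) ''
                ((E.η A B '' ((F.obj A : Set ℕ) ×ˢ (F.obj B : Set ℕ))) ×ˢ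
                  (F.obj (oDiff Ω Ω₁) : Set ℕ)) := by
              refine ⟨(a, b), ⟨haAB, hb⟩, ?_⟩
              rw [hABu]
              exact hxe
            have hx3 := eta_assoc F E he hdAB hAD hBD hx2
            have hODiff : oUnion B (oDiff Ω Ω₁) = oDiff Ω A := by
              funext i
              ext t
              have h1 : Ω₁ i = A i ∪ B i := (congrFun hABu i).symm
              simp only [oUnion, oDiff, Finset.mem_union, Finset.mem_sdiff, h1]
              have h2 : t ∈ B i → t ∉ A i := fun h =>
                Finset.disjoint_right.mp (hdAB i) h
              have h3 : t ∈ B i → t ∈ Ω i := fun h => hsub i ((hBsub i) h)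
              tauto
            rw [hODiff] at hx3
            have hszA : (∑ i, (A i).card) ≤ n := by
              have hcard : ∑ i, (Ω₁ i).card = ∑ i, (A i).card + ∑ i, (B i).card := by
                rw [← Finset.sum_add_distrib]
                apply Finset.sum_congr rfl
                intro i _
                rw [← hABu]
                exact Finset.card_union_of_disjoint (hdAB i)
              have hBpos : 0 < ∑ i, (B i).card := by
                obtain ⟨j, hj⟩ : ∃ j, B j ≠ ∅ := by
                  by_contra h
                  push_neg at h
                  exact hBne (funext h)
                have h1 : 0 < (B j).card :=
                  Finset.card_pos.mpr (Finset.nonempty_iff_ne_empty.mpr hj)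
                have h2 : (B j).card ≤ ∑ i, (B i).card :=
                  Finset.single_le_sum (f := fun i => (B i).card)
                    (fun _ _ => Nat.zero_le _) (Finset.mem_univ j)
                omega
              omega
            exact ih A hszA hωA (fun i => (hAsub i).trans (hsub i)) hx3
          have hωAB : ω ∈ A ρ ∨ ω ∈ B ρ := by
            rw [← hABu] at hω1
            exact Finset.mem_union.mp hω1
          rcases hωAB with h | h
          · exact main A B hdAB hBne hABu h haAB
          · refine main B A (oDisj_symm hdAB) hAne ?_ h (eta_comm F E he hdAB haAB)
            rw [← hABu]
            exact funext fun i => Finset.union_comm _ _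
    have hdself : oDiff Ω Ω = oEmpty r := funext fun i => Finset.sdiff_self _
    have h0 : x ∈ E.η Ω (oDiff Ω Ω) ''
        ((F.obj Ω : Set ℕ) ×ˢ (F.obj (oDiff Ω Ω) : Set ℕ)) := by
      rw [hdself, etaB_right F E he Ω]
      exact hx
    exact key _ Ω le_rfl hω (fun i => subset_rfl) h0
  · rintro ⟨Ω₁, hsub, hmem, ⟨⟨a, b⟩, ⟨ha, hb⟩, rfl⟩⟩
    have haF : a ∈ (F.obj Ω₁ : Set ℕ) := indec_subset F E Ω₁ ha
    have hd : oDisj Ω₁ (oDiff Ω Ω₁) := fun i => Finset.disjoint_sdiff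
    have := E.mem_η hd a (by exact_mod_cast haF) b (by exact_mod_cast hb)
    rw [show oUnion Ω₁ (oDiff Ω Ω₁) = Ω from
      funext fun i => Finset.union_sdiff_of_subset (hsub i)] at this
    exact_mod_cast this

end
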